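/- Let δ ≥ 0, let U be a unitary n×n complex matrix and K a Hermitian n×n matrix with ‖K‖ ≤ 1 and ‖[U, K]‖ ≤ δ. Define H₁ = K, H₂ = (1/2)(U(I − K²)^{1/2} + (I − K²)^{1/2}U*), and H₃ = (i/2)(−U(I − K²)^{1/2} + (I − K²)^{1/2}U*), where (I − K²)^{1/2} is the positive semidefinite square root of I − K². Then (H₁, H₂, H₃) is a δ-representation of the sphere: each H_r is Hermitian, ‖[H_r, H_s]‖ ≤ δ for all r ≠ s, and ‖H₁² + H₂² + H₃² − I‖ ≤ δ. -/

import Mathlib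

open Matrix
open scoped ComplexOrder

noncomputable section

namespace AC

variable {m : Type*} [Fintype m] [DecidableEq m]

/-- The ℓ² operator norm of a complex matrix. -/
def opNorm (A : Matrix m m ℂ) : ℝ :=
  ‖Matrix.toEuclideanCLM (𝕜 := ℂ) A‖

/-- `(H₁, H₂, H₃)` is a δ-representation of the sphere: each `Hᵣ` is Hermitian, all
commutators have ℓ²-operator norm at most `δ`, and `‖H₁² + H₂² + H₃² − I‖ ≤ δ`. -/
def IsSphereRep (δ : ℝ) (H₁ H₂ H₃ : Matrix m m ℂ) : Prop :=
  H₁.IsHermitian ∧ H₂.IsHermitian ∧ H₃.IsHermitian ∧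
  opNorm (H₁ * H₂ - H₂ * H₁) ≤ δ ∧
  opNorm (H₁ * H₃ - H₃ * H₁) ≤ δ ∧
  opNorm (H₂ * H₃ - H₃ * H₂) ≤ δ ∧
  opNorm (H₁ ^ 2 + H₂ ^ 2 + H₃ ^ 2 - 1) ≤ δ

/-- The 2n×2n Hermitian block matrix `S(H₁,H₂,H₃) = [[H₃, H₁ − iH₂], [H₁ + iH₂, −H₃]]`. -/
def sphS (H₁ H₂ H₃ : Matrix m m ℂ) : Matrix (m ⊕ m) (m ⊕ m) ℂ :=
  Matrix.fromBlocks H₃ (H₁ - Complex.I • H₂) (H₁ + Complex.I • H₂) (-H₃)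

open Classical in
/-- The Bott index: the number of positive eigenvalues (with multiplicity) of
`S(H₁,H₂,H₃)` minus `n`.  (Junk value `0` if `S(H₁,H₂,H₃)` is not Hermitian.) -/
def bott (H₁ H₂ H₃ : Matrix m m ℂ) : ℤ :=
  if h : (sphS H₁ H₂ H₃).IsHermitian then
    ((Finset.univ.filter fun i => 0 < h.eigenvalues i).card : ℤ) - Fintype.card m
  else 0

end AC

/-- The positive semidefinite square root of a positive semidefinite matrix (as defined in
the older Mathlib, where it was `Matrix.PosSemidef.sqrt`). -/
def Matrix.PosSemidef.sqrt {n : Type*} [Fintype n] [DecidableEq n] {A : Matrix n n ℂ}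
    (hA : A.PosSemidef) : Matrix n n ℂ :=
  hA.1.eigenvectorUnitary.1 * diagonal ((↑) ∘ (√·) ∘ hA.1.eigenvalues) *
  (star hA.1.eigenvectorUnitary : Matrix n n ℂ)

open scoped MatrixOrder in
lemma Matrix.PosSemidef.sqrt_eq_cfcSqrt {n : Type*} [Fintype n] [DecidableEq n]
    {A : Matrix n n ℂ} (hA : A.PosSemidef) : hA.sqrt = CFC.sqrt A := by
  rw [CFC.sqrt_eq_cfc, cfc_nnreal_eq_real _ A hA.nonneg, hA.1.cfc_eq]
  simp only [Matrix.PosSemidef.sqrt, IsHermitian.cfc]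
  congr 3
  funext i
  simp only [Function.comp_apply, Real.coe_sqrt, Real.coe_toNNReal', max_eq_left (hA.eigenvalues_nonneg i)]
  rfl

open scoped MatrixOrder in
lemma Matrix.PosSemidef.posSemidef_sqrt {n : Type*} [Fintype n] [DecidableEq n]
    {A : Matrix n n ℂ} (hA : A.PosSemidef) : hA.sqrt.PosSemidef := by
  rw [hA.sqrt_eq_cfcSqrt]
  exact Matrix.nonneg_iff_posSemidef.mp (CFC.sqrt_nonneg A)

open scoped MatrixOrder in
lemma Matrix.PosSemidef.sqrt_mul_self {n : Type*} [Fintype n] [DecidableEq n]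
    {A : Matrix n n ℂ} (hA : A.PosSemidef) : hA.sqrt * hA.sqrt = A := by
  rw [hA.sqrt_eq_cfcSqrt]
  exact CFC.sqrt_mul_sqrt_self A hA.nonneg

open scoped MatrixOrder in
lemma Matrix.PosSemidef.eq_sqrt_of_sq_eq {n : Type*} [Fintype n] [DecidableEq n]
    {A B : Matrix n n ℂ} (hB : B.PosSemidef) (hA : A.PosSemidef) (h : B ^ 2 = A) :
    B = hA.sqrt := by
  rw [hA.sqrt_eq_cfcSqrt]
  exact (CFC.sqrt_unique (by rw [← sq]; exact h) hB.nonneg).symm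

set_option maxHeartbeats 1000000 in
set_option synthInstance.maxHeartbeats 1000000 in
lemma posSemidef_of_clm_nonneg {n : ℕ} (A : Matrix (Fin n) (Fin n) ℂ)
    (h : 0 ≤ Matrix.toEuclideanCLM (𝕜 := ℂ) A) : A.PosSemidef := by
  set s := cfc Real.sqrt (Matrix.toEuclideanCLM (𝕜 := ℂ) A) with hsdef
  have hs0 : 0 ≤ s := cfc_nonneg fun x _ => Real.sqrt_nonneg x
  have hss : s * s = Matrix.toEuclideanCLM (𝕜 := ℂ) A := by
    rw [hsdef, ← cfc_mul Real.sqrt Real.sqrt _]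
    rw [cfc_congr (g := fun x : ℝ => x)
      fun x hx => Real.mul_self_sqrt (spectrum_nonneg_of_nonneg h hx)]
    exact cfc_id' ℝ _
  have hAB : A = ((Matrix.toEuclideanCLM (𝕜 := ℂ) (n := Fin n)).symm s)ᴴ *
      ((Matrix.toEuclideanCLM (𝕜 := ℂ) (n := Fin n)).symm s) := by
    have h1 : (Matrix.toEuclideanCLM (𝕜 := ℂ) (n := Fin n)).symm (s * s) = A := by
      rw [hss, StarAlgEquiv.symm_apply_apply]
    rw [← h1, _root_.map_mul, ← Matrix.star_eq_conjTranspose, ← map_star,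
      (IsSelfAdjoint.of_nonneg hs0).star_eq]
  rw [hAB]
  exact Matrix.posSemidef_conjTranspose_mul_self _

lemma aux_bounds {E : Type*} [NormedRing E] [NormedSpace ℂ E]
    [IsScalarTower ℂ E E] [SMulCommClass ℂ E E]
    (δ : ℝ) (hδ0 : 0 ≤ δ) (u v k r : E)
    (huv : u * v = 1) (hvu : v * u = 1)
    (hk1 : ‖k‖ ≤ 1) (hr1 : ‖r‖ ≤ 1) (hv1 : ‖v‖ ≤ 1)
    (hrk : r * k = k * r) (hrr : r * r = 1 - k * k)
    (hc : ‖u * k - k * u‖ ≤ δ) :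
    ‖k * ((1/2 : ℂ) • (u * r + r * v)) - ((1/2 : ℂ) • (u * r + r * v)) * k‖ ≤ δ ∧
    ‖k * ((Complex.I / 2) • (-(u * r) + r * v)) -
      ((Complex.I / 2) • (-(u * r) + r * v)) * k‖ ≤ δ ∧
    ‖((1/2 : ℂ) • (u * r + r * v)) * ((Complex.I / 2) • (-(u * r) + r * v)) -
      ((Complex.I / 2) • (-(u * r) + r * v)) * ((1/2 : ℂ) • (u * r + r * v))‖ ≤ δ ∧
    ‖k ^ 2 + ((1/2 : ℂ) • (u * r + r * v)) ^ 2 +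
      ((Complex.I / 2) • (-(u * r) + r * v)) ^ 2 - 1‖ ≤ δ := by
  have hrk2 : ∀ x : E, r * (k * x) = k * (r * x) := fun x => by
    rw [← mul_assoc, hrk, mul_assoc]
  have hrr2 : ∀ x : E, r * (r * x) = x - k * (k * x) := fun x => by
    rw [← mul_assoc, hrr, sub_mul, one_mul, mul_assoc]
  have huv2 : ∀ x : E, u * (v * x) = x := fun x => by rw [← mul_assoc, huv, one_mul]
  have hvu2 : ∀ x : E, v * (u * x) = x := fun x => by rw [← mul_assoc, hvu, one_mul]
  have hI : Complex.I / 2 * (Complex.I / 2) = -(1/4 : ℂ) := by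
    rw [div_mul_div_comm, Complex.I_mul_I]; norm_num
  set c := u * k - k * u with hcdef
  have hchalf : ‖(1/2 : ℂ)‖ = 1/2 := by norm_num
  have hIhalf : ‖Complex.I / 2‖ = 1/2 := by
    rw [norm_div, Complex.norm_I]; norm_num
  have hcr : ‖c * r‖ ≤ δ := by
    have := norm_mul_le c r
    nlinarith [norm_nonneg c, norm_nonneg r]
  have hvcv : ‖v * (c * v)‖ ≤ δ := by
    have h1 := norm_mul_le v (c * v)
    have h2 := norm_mul_le c v
    nlinarith [norm_nonneg c, norm_nonneg v, norm_nonneg (c * v)]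
  have hkc : ‖k * c‖ ≤ δ := by
    have := norm_mul_le k c
    nlinarith [norm_nonneg c, norm_nonneg k]
  have hck : ‖c * k‖ ≤ δ := by
    have := norm_mul_le c k
    nlinarith [norm_nonneg c, norm_nonneg k]
  have hsum1 : ‖-(c * r) + r * (v * (c * v))‖ ≤ δ + δ := by
    refine (norm_add_le _ _).trans ?_
    rw [norm_neg]
    have h3 := norm_mul_le r (v * (c * v))
    nlinarith [norm_nonneg r, norm_nonneg (v * (c * v))]
  have hsum2 : ‖c * r + r * (v * (c * v))‖ ≤ δ + δ := by
    refine (norm_add_le _ _).trans ?_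
    have h3 := norm_mul_le r (v * (c * v))
    nlinarith [norm_nonneg r, norm_nonneg (v * (c * v))]
  have hsum3 : ‖(-(k * c) + -(c * k)) * v‖ ≤ δ + δ := by
    refine (norm_mul_le _ _).trans ?_
    have h4 := norm_add_le (-(k * c)) (-(c * k))
    rw [norm_neg, norm_neg] at h4
    nlinarith [norm_nonneg (-(k*c) + -(c*k)), norm_nonneg v]
  refine ⟨?_, ?_, ?_, ?_⟩
  · have key : k * ((1/2 : ℂ) • (u * r + r * v)) - ((1/2 : ℂ) • (u * r + r * v)) * k
        = (1/2 : ℂ) • (-(c * r) + r * (v * (c * v))) := by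
      rw [hcdef]
      simp only [mul_add, add_mul, sub_mul, mul_sub, smul_add, smul_sub, smul_neg,
        neg_mul, mul_neg, mul_smul_comm, smul_mul_assoc, smul_smul, mul_assoc,
        hrk, hrk2, hrr, hrr2, huv, huv2, hvu, hvu2, mul_one, one_mul]
      module
    rw [key, norm_smul, hchalf]
    linarith
  · have key : k * ((Complex.I / 2) • (-(u * r) + r * v)) -
        ((Complex.I / 2) • (-(u * r) + r * v)) * k
        = (Complex.I / 2) • (c * r + r * (v * (c * v))) := by
      rw [hcdef]
      simp only [mul_add, add_mul, sub_mul, mul_sub, smul_add, smul_sub, smul_neg,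
        neg_mul, mul_neg, mul_smul_comm, smul_mul_assoc, smul_smul, mul_assoc,
        hrk, hrk2, hrr, hrr2, huv, huv2, hvu, hvu2, mul_one, one_mul]
      module
    rw [key, norm_smul, hIhalf]
    linarith
  · have key : ((1/2 : ℂ) • (u * r + r * v)) * ((Complex.I / 2) • (-(u * r) + r * v)) -
        ((Complex.I / 2) • (-(u * r) + r * v)) * ((1/2 : ℂ) • (u * r + r * v))
        = (Complex.I / 2) • ((-(k * c) + -(c * k)) * v) := by
      rw [hcdef]
      simp only [mul_add, add_mul, sub_mul, mul_sub, smul_add, smul_sub, smul_neg,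
        neg_mul, mul_neg, mul_smul_comm, smul_mul_assoc, smul_smul, mul_assoc,
        hrk, hrk2, hrr, hrr2, huv, huv2, hvu, hvu2, mul_one, one_mul, hI]
      module
    rw [key, norm_smul, hIhalf]
    linarith
  · have key : k ^ 2 + ((1/2 : ℂ) • (u * r + r * v)) ^ 2 +
        ((Complex.I / 2) • (-(u * r) + r * v)) ^ 2 - 1
        = (1/2 : ℂ) • ((-(k * c) + -(c * k)) * v) := by
      rw [hcdef]
      simp only [pow_two, mul_add, add_mul, sub_mul, mul_sub, smul_add, smul_sub, smul_neg,
        neg_mul, mul_neg, mul_smul_comm, smul_mul_assoc, smul_smul, mul_assoc,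
        hrk, hrk2, hrr, hrr2, huv, huv2, hvu, hvu2, mul_one, one_mul, hI]
      module
    rw [key, norm_smul, hchalf]
    linarith

set_option maxHeartbeats 2000000 in
set_option synthInstance.maxHeartbeats 1000000 in
/-- Lemma (`lem:toSpherical`, cylindrical to spherical coordinates): if `U` is unitary,
`K` is a Hermitian contraction, and `‖[U,K]‖ ≤ δ`, then `I − K²` is positive
semidefinite and, with `R = (I − K²)^{1/2}` its positive semidefinite square root, the
triple `(K, (1/2)(UR + RU*), (i/2)(−UR + RU*))` is a δ-representation of the sphere. -/
theorem cylindrical_to_spherical {n : ℕ} (δ : ℝ) (hδ0 : 0 ≤ δ)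
    (U K : Matrix (Fin n) (Fin n) ℂ)
    (hU₁ : Uᴴ * U = 1) (hU₂ : U * Uᴴ = 1)
    (hK : K.IsHermitian) (hKnorm : AC.opNorm K ≤ 1)
    (hcomm : AC.opNorm (U * K - K * U) ≤ δ) :
    (1 - K ^ 2 : Matrix (Fin n) (Fin n) ℂ).PosSemidef ∧
    ∀ (hpsd : (1 - K ^ 2 : Matrix (Fin n) (Fin n) ℂ).PosSemidef),
      AC.IsSphereRep δ K
        ((1/2 : ℂ) • (U * hpsd.sqrt + hpsd.sqrt * Uᴴ))
        ((Complex.I / 2) • (-(U * hpsd.sqrt) + hpsd.sqrt * Uᴴ)) := by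
  classical
  rcases Nat.eq_zero_or_pos n with hn | hn
  · subst hn
    constructor
    · rw [Subsingleton.elim (1 - K ^ 2 : Matrix (Fin 0) (Fin 0) ℂ)
        ((0 : Matrix (Fin 0) (Fin 0) ℂ)ᴴ * 0)]
      exact Matrix.posSemidef_conjTranspose_mul_self _
    · intro hpsd
      have hz : ∀ A : Matrix (Fin 0) (Fin 0) ℂ, AC.opNorm A ≤ δ := by
        intro A
        rw [Subsingleton.elim A 0]
        have : AC.opNorm (0 : Matrix (Fin 0) (Fin 0) ℂ) = 0 := by
          simp only [AC.opNorm, map_zero, norm_zero]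
        rw [this]; exact hδ0
      exact ⟨hK, Subsingleton.elim _ _, Subsingleton.elim _ _, hz _, hz _, hz _, hz _⟩
  haveI : NeZero n := ⟨hn.ne'⟩
  have hk1 : ‖Matrix.toEuclideanCLM (𝕜 := ℂ) K‖ ≤ 1 := hKnorm
  have hksa : _root_.IsSelfAdjoint (Matrix.toEuclideanCLM (𝕜 := ℂ) K) := by
    have h : star (Matrix.toEuclideanCLM (𝕜 := ℂ) K) = Matrix.toEuclideanCLM (𝕜 := ℂ) K := by
      rw [← map_star, Matrix.star_eq_conjTranspose, hK.eq]
    exact h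
  have hone : ‖(1 : EuclideanSpace ℂ (Fin n) →L[ℂ] EuclideanSpace ℂ (Fin n))‖ ≤ 1 :=
    ContinuousLinearMap.norm_id_le
  have hspec : ∀ x ∈ spectrum ℝ (Matrix.toEuclideanCLM (𝕜 := ℂ) K), 0 ≤ 1 - x * x := by
    intro x hx
    have h := spectrum.norm_le_norm_of_mem hx
    rw [Real.norm_eq_abs] at h
    have h2 := abs_le.mp (h.trans hk1)
    nlinarith [h2.1, h2.2]
  have h1mk : cfc (fun x : ℝ => 1 - x * x) (Matrix.toEuclideanCLM (𝕜 := ℂ) K)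
      = 1 - Matrix.toEuclideanCLM (𝕜 := ℂ) K * Matrix.toEuclideanCLM (𝕜 := ℂ) K := by
    rw [cfc_sub (fun _ : ℝ => (1 : ℝ)) (fun x : ℝ => x * x) (Matrix.toEuclideanCLM (𝕜 := ℂ) K),
      cfc_const_one ℝ (Matrix.toEuclideanCLM (𝕜 := ℂ) K),
      cfc_mul (fun x : ℝ => x) (fun x : ℝ => x) (Matrix.toEuclideanCLM (𝕜 := ℂ) K),
      cfc_id' ℝ (Matrix.toEuclideanCLM (𝕜 := ℂ) K)]
  have ha : (0 : EuclideanSpace ℂ (Fin n) →L[ℂ] EuclideanSpace ℂ (Fin n))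
      ≤ 1 - Matrix.toEuclideanCLM (𝕜 := ℂ) K * Matrix.toEuclideanCLM (𝕜 := ℂ) K := by
    rw [← h1mk]; exact cfc_nonneg hspec
  have hφ1K : Matrix.toEuclideanCLM (𝕜 := ℂ) (1 - K ^ 2)
      = 1 - Matrix.toEuclideanCLM (𝕜 := ℂ) K * Matrix.toEuclideanCLM (𝕜 := ℂ) K := by
    rw [_root_.map_sub, _root_.map_one, map_pow, pow_two]
  have PSD1 : (1 - K ^ 2 : Matrix (Fin n) (Fin n) ℂ).PosSemidef :=
    posSemidef_of_clm_nonneg _ (by rw [hφ1K]; exact ha)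
  refine ⟨PSD1, fun hpsd => ?_⟩
  have hRher : hpsd.sqrt.IsHermitian := hpsd.posSemidef_sqrt.1
  have hrstar : star (Matrix.toEuclideanCLM (𝕜 := ℂ) hpsd.sqrt)
      = Matrix.toEuclideanCLM (𝕜 := ℂ) hpsd.sqrt := by
    rw [← map_star, Matrix.star_eq_conjTranspose, hRher.eq]
  have hrr : Matrix.toEuclideanCLM (𝕜 := ℂ) hpsd.sqrt * Matrix.toEuclideanCLM (𝕜 := ℂ) hpsd.sqrt
      = 1 - Matrix.toEuclideanCLM (𝕜 := ℂ) K * Matrix.toEuclideanCLM (𝕜 := ℂ) K := by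
    rw [← _root_.map_mul, hpsd.sqrt_mul_self, hφ1K]
  have huv : Matrix.toEuclideanCLM (𝕜 := ℂ) U * Matrix.toEuclideanCLM (𝕜 := ℂ) Uᴴ = 1 := by
    rw [← _root_.map_mul, hU₂, _root_.map_one]
  have hvu : Matrix.toEuclideanCLM (𝕜 := ℂ) Uᴴ * Matrix.toEuclideanCLM (𝕜 := ℂ) U = 1 := by
    rw [← _root_.map_mul, hU₁, _root_.map_one]
  have hsu : star (Matrix.toEuclideanCLM (𝕜 := ℂ) U) = Matrix.toEuclideanCLM (𝕜 := ℂ) Uᴴ := by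
    rw [← map_star, Matrix.star_eq_conjTranspose]
  have hu1 : ‖Matrix.toEuclideanCLM (𝕜 := ℂ) U‖ ≤ 1 := by
    have h := CStarRing.norm_star_mul_self (x := Matrix.toEuclideanCLM (𝕜 := ℂ) U)
    rw [hsu, hvu] at h
    nlinarith [norm_nonneg (Matrix.toEuclideanCLM (𝕜 := ℂ) U)]
  have hsv : star (Matrix.toEuclideanCLM (𝕜 := ℂ) Uᴴ) = Matrix.toEuclideanCLM (𝕜 := ℂ) U := by
    rw [← map_star, Matrix.star_eq_conjTranspose, Matrix.conjTranspose_conjTranspose]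
  have hv1 : ‖Matrix.toEuclideanCLM (𝕜 := ℂ) Uᴴ‖ ≤ 1 := by
    have h := CStarRing.norm_star_mul_self (x := Matrix.toEuclideanCLM (𝕜 := ℂ) Uᴴ)
    rw [hsv, huv] at h
    nlinarith [norm_nonneg (Matrix.toEuclideanCLM (𝕜 := ℂ) Uᴴ)]
  have hkk0 : (0 : EuclideanSpace ℂ (Fin n) →L[ℂ] EuclideanSpace ℂ (Fin n))
      ≤ Matrix.toEuclideanCLM (𝕜 := ℂ) K * Matrix.toEuclideanCLM (𝕜 := ℂ) K := by
    have h := star_mul_self_nonneg (Matrix.toEuclideanCLM (𝕜 := ℂ) K)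
    rwa [hksa.star_eq] at h
  have hr1 : ‖Matrix.toEuclideanCLM (𝕜 := ℂ) hpsd.sqrt‖ ≤ 1 := by
    have h := CStarRing.norm_star_mul_self (x := Matrix.toEuclideanCLM (𝕜 := ℂ) hpsd.sqrt)
    rw [hrstar, hrr] at h
    have hle : ‖(1 : EuclideanSpace ℂ (Fin n) →L[ℂ] EuclideanSpace ℂ (Fin n))
        - Matrix.toEuclideanCLM (𝕜 := ℂ) K * Matrix.toEuclideanCLM (𝕜 := ℂ) K‖ ≤ 1 :=
      le_trans (CStarAlgebra.norm_le_norm_of_nonneg_of_le ha (sub_le_self _ hkk0)) hone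
    nlinarith [norm_nonneg (Matrix.toEuclideanCLM (𝕜 := ℂ) hpsd.sqrt)]
  have hfsq : cfc (fun x : ℝ => Real.sqrt (1 - x * x)) (Matrix.toEuclideanCLM (𝕜 := ℂ) K)
        * cfc (fun x : ℝ => Real.sqrt (1 - x * x)) (Matrix.toEuclideanCLM (𝕜 := ℂ) K)
      = 1 - Matrix.toEuclideanCLM (𝕜 := ℂ) K * Matrix.toEuclideanCLM (𝕜 := ℂ) K := by
    rw [← cfc_mul (fun x : ℝ => Real.sqrt (1 - x * x)) (fun x : ℝ => Real.sqrt (1 - x * x))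
      (Matrix.toEuclideanCLM (𝕜 := ℂ) K),
      cfc_congr (g := fun x : ℝ => 1 - x * x) fun x hx => Real.mul_self_sqrt (hspec x hx), h1mk]
  have hf0 : 0 ≤ cfc (fun x : ℝ => Real.sqrt (1 - x * x)) (Matrix.toEuclideanCLM (𝕜 := ℂ) K) :=
    cfc_nonneg fun x _ => Real.sqrt_nonneg _
  have hBpsd : ((Matrix.toEuclideanCLM (𝕜 := ℂ) (n := Fin n)).symm
      (cfc (fun x : ℝ => Real.sqrt (1 - x * x)) (Matrix.toEuclideanCLM (𝕜 := ℂ) K))).PosSemidef :=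
    posSemidef_of_clm_nonneg _ (by rw [StarAlgEquiv.apply_symm_apply]; exact hf0)
  have hBsq : ((Matrix.toEuclideanCLM (𝕜 := ℂ) (n := Fin n)).symm
      (cfc (fun x : ℝ => Real.sqrt (1 - x * x)) (Matrix.toEuclideanCLM (𝕜 := ℂ) K))) ^ 2
      = 1 - K ^ 2 := by
    rw [pow_two, ← _root_.map_mul, hfsq, ← hφ1K, StarAlgEquiv.symm_apply_apply]
  have hBeq : ((Matrix.toEuclideanCLM (𝕜 := ℂ) (n := Fin n)).symm
      (cfc (fun x : ℝ => Real.sqrt (1 - x * x)) (Matrix.toEuclideanCLM (𝕜 := ℂ) K)))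
      = hpsd.sqrt := hBpsd.eq_sqrt_of_sq_eq hpsd hBsq
  have hrk : Matrix.toEuclideanCLM (𝕜 := ℂ) hpsd.sqrt * Matrix.toEuclideanCLM (𝕜 := ℂ) K
      = Matrix.toEuclideanCLM (𝕜 := ℂ) K * Matrix.toEuclideanCLM (𝕜 := ℂ) hpsd.sqrt := by
    rw [← hBeq, StarAlgEquiv.apply_symm_apply]
    have hcomm2 := cfc_commute_cfc (fun x : ℝ => x) (fun x : ℝ => Real.sqrt (1 - x * x))
      (Matrix.toEuclideanCLM (𝕜 := ℂ) K)
    rw [cfc_id' ℝ (Matrix.toEuclideanCLM (𝕜 := ℂ) K)] at hcomm2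
    exact hcomm2.eq.symm
  have hc : ‖Matrix.toEuclideanCLM (𝕜 := ℂ) U * Matrix.toEuclideanCLM (𝕜 := ℂ) K
      - Matrix.toEuclideanCLM (𝕜 := ℂ) K * Matrix.toEuclideanCLM (𝕜 := ℂ) U‖ ≤ δ := by
    have h : ‖Matrix.toEuclideanCLM (𝕜 := ℂ) (U * K - K * U)‖ ≤ δ := hcomm
    rwa [_root_.map_sub, _root_.map_mul, _root_.map_mul] at h
  have haux := aux_bounds δ hδ0 (Matrix.toEuclideanCLM (𝕜 := ℂ) U)
    (Matrix.toEuclideanCLM (𝕜 := ℂ) Uᴴ) (Matrix.toEuclideanCLM (𝕜 := ℂ) K)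
    (Matrix.toEuclideanCLM (𝕜 := ℂ) hpsd.sqrt) huv hvu hk1 hr1 hv1 hrk hrr hc
  have h2her : ((1/2 : ℂ) • (U * hpsd.sqrt + hpsd.sqrt * Uᴴ)).IsHermitian := by
    show _ᴴ = _
    rw [Matrix.conjTranspose_smul, Matrix.conjTranspose_add, Matrix.conjTranspose_mul,
      Matrix.conjTranspose_mul, Matrix.conjTranspose_conjTranspose, hRher.eq,
      show star (1/2 : ℂ) = 1/2 by simp, add_comm]
  have h3her : ((Complex.I / 2) • (-(U * hpsd.sqrt) + hpsd.sqrt * Uᴴ)).IsHermitian := by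
    show _ᴴ = _
    rw [Matrix.conjTranspose_smul, Matrix.conjTranspose_add, Matrix.conjTranspose_neg,
      Matrix.conjTranspose_mul, Matrix.conjTranspose_mul, Matrix.conjTranspose_conjTranspose,
      hRher.eq, show star (Complex.I / 2 : ℂ) = -(Complex.I / 2) by simp [Complex.star_def, neg_div]]
    module
  refine ⟨hK, h2her, h3her, ?_, ?_, ?_, ?_⟩
  · unfold AC.opNorm
    simp only [_root_.map_sub, _root_.map_add, _root_.map_mul, _root_.map_smul, _root_.map_neg]
    exact haux.1
  · unfold AC.opNorm
    simp only [_root_.map_sub, _root_.map_add, _root_.map_mul, _root_.map_smul, _root_.map_neg]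
    exact haux.2.1
  · unfold AC.opNorm
    simp only [_root_.map_sub, _root_.map_add, _root_.map_mul, _root_.map_smul, _root_.map_neg]
    exact haux.2.2.1
  · unfold AC.opNorm
    simp only [_root_.map_sub, _root_.map_add, _root_.map_mul, _root_.map_smul, _root_.map_neg,
      map_pow, _root_.map_one]
    exact haux.2.2.2
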